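/- Let Y_s ∈ ℂ with Re(Y_s) > 0 and Im(Y_s) < 0, and define the delayed admittance Y_d(τ) = e^{−jωτ/2}·Y_s for ω > 0, τ ≥ 0. Then Re(Y_d(τ)) ≥ 0 for all τ ∈ [0, (2/ω)·arctan(−Re(Y_s)/Im(Y_s))], and Re(Y_d(τ)) < 0 for τ slightly beyond this value; i.e., the smallest τ ≥ 0 at which Re(Y_d(τ)) = 0 is τ* = (2/ω)·arctan(−Re(Y_s)/Im(Y_s)). -/

import Mathlib

open Complex

/-- smallest delay making a rotated passive admittance non-passive. -/
theorem delayed_admittance_critical_delay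
    (Ys : ℂ) (hre : 0 < Ys.re) (him : Ys.im < 0) (ω : ℝ) (hω : 0 < ω)
    (Yd : ℝ → ℂ) (hYd : ∀ τ, Yd τ = Complex.exp (-Complex.I * (ω : ℂ) * (τ : ℂ) / 2) * Ys)
    (τstar : ℝ) (hτstar : τstar = (2 / ω) * Real.arctan (-Ys.re / Ys.im)) :
    (∀ τ ∈ Set.Icc (0 : ℝ) τstar, 0 ≤ (Yd τ).re) ∧
    (∃ ε > 0, ∀ τ ∈ Set.Ioo τstar (τstar + ε), (Yd τ).re < 0) ∧
    IsLeast {τ : ℝ | 0 ≤ τ ∧ (Yd τ).re = 0} τstar := by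
  have hpi := Real.pi_pos
  set a := Ys.re with ha
  set b := Ys.im with hb
  set t := Real.arctan (-a / b) with htdef
  have hab : (0:ℝ) < -a / b := div_pos_of_neg_of_neg (by linarith) him
  have ht0 : 0 < t := by
    have := Real.arctan_strictMono hab
    rwa [Real.arctan_zero] at this
  have ht2 : t < Real.pi / 2 := Real.arctan_lt_pi_div_two _
  have htan : Real.tan t = -a / b := Real.tan_arctan _
  set F : ℝ → ℝ := fun θ => Real.cos θ * a + Real.sin θ * b with hFdef
  have hbne : b ≠ 0 := ne_of_lt him
  have hF : ∀ θ : ℝ, θ < Real.pi / 2 → -(Real.pi/2) < θ →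
      F θ = -b * Real.cos θ * (Real.tan t - Real.tan θ) := by
    intro θ hθ hθ'
    have hc : Real.cos θ ≠ 0 :=
      (Real.cos_pos_of_mem_Ioo ⟨hθ', hθ⟩).ne'
    rw [htan, Real.tan_eq_sin_div_cos]
    field_simp [hFdef]
    ring
  have hmem : ∀ θ : ℝ, 0 ≤ θ → θ < Real.pi / 2 →
      θ ∈ Set.Ioo (-(Real.pi/2)) (Real.pi/2) := by
    intro θ h1 h2; exact ⟨by linarith, h2⟩
  have htmem := hmem t ht0.le ht2
  have hpos : ∀ θ : ℝ, 0 ≤ θ → θ < t → 0 < F θ := by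
    intro θ h0 hlt
    have hθ2 : θ < Real.pi / 2 := lt_trans hlt ht2
    rw [hF θ hθ2 (by linarith)]
    have hc : 0 < Real.cos θ := Real.cos_pos_of_mem_Ioo ⟨by linarith, hθ2⟩
    have := Real.strictMonoOn_tan (hmem θ h0 hθ2) htmem hlt
    have hb' : 0 < -b := by linarith
    have : 0 < Real.tan t - Real.tan θ := by linarith
    positivity
  have hzero : F t = 0 := by
    rw [hF t ht2 (by linarith)]; ring
  have hneg : ∀ θ : ℝ, t < θ → θ < Real.pi / 2 → F θ < 0 := by
    intro θ hlt hθ2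
    rw [hF θ hθ2 (by linarith)]
    have hc : 0 < Real.cos θ := Real.cos_pos_of_mem_Ioo ⟨by linarith, hθ2⟩
    have := Real.strictMonoOn_tan htmem (hmem θ (by linarith) hθ2) hlt
    have hb' : 0 < -b := by linarith
    exact mul_neg_of_pos_of_neg (mul_pos hb' hc) (by linarith)
  have hre' : ∀ τ : ℝ, (Yd τ).re = F (ω * τ / 2) := by
    intro τ
    rw [hYd τ]
    have : (-Complex.I * (ω : ℂ) * (τ : ℂ) / 2) = Complex.I * (-(ω * τ / 2) : ℝ) := by
      push_cast; ring
    rw [this]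
    simp [Complex.mul_re, Complex.exp_re, Complex.exp_im, hFdef, Real.cos_neg,
      Real.sin_neg]
    rfl
  have hts : ω * τstar / 2 = t := by
    rw [hτstar]; field_simp
  have hτ0 : 0 < τstar := by
    rw [hτstar]; exact mul_pos (by positivity) ht0
  refine ⟨?_, ?_, ?_⟩
  · rintro τ ⟨h1, h2⟩
    rw [hre']
    rcases eq_or_lt_of_le h2 with h | h
    · rw [h, hts, hzero]
    · have hθlt : ω * τ / 2 < t := by
        rw [← hts]
        have := mul_lt_mul_of_pos_left h hω
        linarith
      exact (hpos _ (by positivity) hθlt).le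
  · refine ⟨(2 / ω) * (Real.pi / 2 - t), mul_pos (by positivity) (by linarith), ?_⟩
    rintro τ ⟨h1, h2⟩
    rw [hre']
    apply hneg
    · rw [← hts]
      have := mul_lt_mul_of_pos_left h1 hω
      linarith
    · have h3 : ω * τ < ω * (τstar + 2 / ω * (Real.pi / 2 - t)) :=
        mul_lt_mul_of_pos_left h2 hω
      have hωτs : ω * τstar = 2 * t := by
        have := hts; linarith
      have hexp : ω * (τstar + 2 / ω * (Real.pi / 2 - t)) = 2 * t + 2 * (Real.pi / 2 - t) := by
        rw [mul_add, hωτs]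
        have hne : ω ≠ 0 := ne_of_gt hω
        field_simp
      linarith
  · constructor
    · refine ⟨hτ0.le, ?_⟩
      rw [hre', hts, hzero]
    · rintro τ ⟨h0, hz⟩
      by_contra h
      push_neg at h
      have hθlt : ω * τ / 2 < t := by
        rw [← hts]
        have := mul_lt_mul_of_pos_left h hω
        linarith
      have := hpos (ω * τ / 2) (by positivity) hθlt
      rw [hre'] at hz
      linarith
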